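/- Let Γ be the complement of the Schläfli graph (a 10-regular strongly regular graph on 27 vertices with second largest eigenvalue 1). Let Σ be an induced (t+2)-regular subgraph of Γ on 3(t+1) vertices for some integer 0 ≤ t ≤ 7. Then the induced subgraph on the remaining 27 − 3(t+1) = 24 − 3t vertices is (9 − t)-regular. -/

import Mathlib

open SimpleGraph Finset Matrix
/-- The second largest eigenvalue of the real symmetric matrix `A` is at most `t`:
all eigenvalues except (possibly) one are at most `t`. -/
def Matrix.SecondEigLE {n : Type*} [Fintype n] [DecidableEq n]
    (A : Matrix n n ℝ) (t : ℝ) : Prop :=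
  ∀ hA : A.IsHermitian, ∃ i, ∀ j, j ≠ i → hA.eigenvalues j ≤ t

theorem regular_subgraph_complement_schlafli {V : Type*} [Fintype V] [DecidableEq V]
    (G : SimpleGraph V) [DecidableRel G.Adj]
    (hG : G.IsSRGWith 27 10 1 5)
    (hEig : Matrix.SecondEigLE (G.adjMatrix ℝ) 1)
    (t : ℕ) (ht : t ≤ 7) (A : Finset V) (hcard : A.card = 3 * (t + 1))
    (hregA : ∀ x ∈ A, ((G.neighborFinset x).filter (· ∈ A)).card = t + 2) :
    ∀ y ∈ Aᶜ, ((G.neighborFinset y).filter (· ∈ Aᶜ)).card = 9 - t := by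
  classical
  have hM : (G.adjMatrix ℝ).IsHermitian := by
    ext i j
    simp [Matrix.conjTranspose_apply, SimpleGraph.adjMatrix_apply, G.adj_comm j i]
  obtain ⟨i, hi⟩ := hEig hM
  set M : Matrix V V ℝ := G.adjMatrix ℝ with hMdef
  set μ : V → ℝ := hM.eigenvalues with hμ
  set b := hM.eigenvectorBasis with hb
  set v : V → V → ℝ := fun j => ⇑(b j) with hv
  have heig : ∀ j, M *ᵥ v j = μ j • v j := fun j => hM.mulVec_eigenvectorBasis j
  have horth : ∀ j k, v j ⬝ᵥ v k = if j = k then 1 else 0 := by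
    intro j k
    have h := orthonormal_iff_ite.mp b.orthonormal j k
    simpa [PiLp.inner_apply, RCLike.inner_apply, dotProduct, v, mul_comm] using h
  -- expansion in the eigenbasis
  have hexp : ∀ x : V → ℝ, x = ∑ j, (v j ⬝ᵥ x) • v j := by
    intro x
    have h2 : ∀ j, b.repr (WithLp.toLp 2 x) j = v j ⬝ᵥ x := by
      intro j
      rw [b.repr_apply_apply]
      simp [PiLp.inner_apply, RCLike.inner_apply, dotProduct, v, mul_comm]
    have h := b.sum_repr (WithLp.toLp 2 x)
    simp_rw [h2] at h
    have h' := congrArg (WithLp.linearEquiv 2 ℝ (V → ℝ)) h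
    rw [map_sum] at h'
    simp only [_root_.map_smul] at h'
    exact h'.symm
  -- sums of scaled eigenvectors against a fixed vector
  have hsumdot : ∀ (c w : V → ℝ), (∑ j, c j • v j) ⬝ᵥ w = ∑ j, c j * (v j ⬝ᵥ w) := by
    intro c w
    simp only [dotProduct, Finset.sum_apply, Pi.smul_apply, smul_eq_mul,
      Finset.sum_mul, Finset.mul_sum]
    rw [Finset.sum_comm]
    exact Finset.sum_congr rfl fun j _ => Finset.sum_congr rfl fun w' _ => by ring
  -- Parseval-type identity
  have hpars : ∀ x y : V → ℝ, x ⬝ᵥ y = ∑ j, (v j ⬝ᵥ x) * (v j ⬝ᵥ y) := by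
    intro x y
    conv_lhs => rw [hexp x]
    rw [hsumdot]
  -- symmetry of M in dot products
  have hsdp : ∀ x y : V → ℝ, x ⬝ᵥ (M *ᵥ y) = (M *ᵥ x) ⬝ᵥ y := by
    intro x y
    rw [Matrix.dotProduct_mulVec, ← Matrix.mulVec_transpose]
    have : Mᵀ = M := G.isSymm_adjMatrix
    rw [this]
  -- vectors
  set f : V → ℝ := fun x => if x ∈ A then 1 else 0 with hf
  set u : V → ℝ := fun _ => 1 with hu
  set c : ℝ := ((t : ℝ) + 1) / 9 with hc
  set z : V → ℝ := f - c • u with hz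
  have hcardV : (Fintype.card V : ℝ) = 27 := by rw [hG.card]; norm_num
  -- M *ᵥ u = 10 • u
  have hMu : M *ᵥ u = (10 : ℝ) • u := by
    funext x
    rw [SimpleGraph.adjMatrix_mulVec_apply]
    simp [hu, SimpleGraph.IsRegularOfDegree.degree_eq, hG.regular x]
  -- (M *ᵥ f) x = number of neighbors of x in A
  have hMf : ∀ x, (M *ᵥ f) x = (((G.neighborFinset x).filter (· ∈ A)).card : ℝ) := by
    intro x
    rw [SimpleGraph.adjMatrix_mulVec_apply]
    rw [Finset.card_filter]
    push_cast
    simp [hf]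
  -- dot product values
  have hfcard : ∑ x : V, f x = (A.card : ℝ) := by
    simp [hf, Finset.sum_ite_mem, Finset.univ_inter]
  have hff : f ⬝ᵥ f = 3 * ((t : ℝ) + 1) := by
    have h1 : f ⬝ᵥ f = ∑ x : V, f x :=
      Finset.sum_congr rfl fun x _ => by by_cases hx : x ∈ A <;> simp [hf, hx]
    rw [h1, hfcard, hcard]; push_cast; ring
  have huf : u ⬝ᵥ f = 3 * ((t : ℝ) + 1) := by
    have h1 : u ⬝ᵥ f = ∑ x : V, f x :=
      Finset.sum_congr rfl fun x _ => by simp [hu]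
    rw [h1, hfcard, hcard]; push_cast; ring
  have huu : u ⬝ᵥ u = 27 := by
    simp [dotProduct, hu, Finset.card_univ, hcardV]
  have hfMf : f ⬝ᵥ (M *ᵥ f) = 3 * ((t : ℝ) + 1) * ((t : ℝ) + 2) := by
    have h1 : f ⬝ᵥ (M *ᵥ f) = ∑ x ∈ A, (M *ᵥ f) x := by
      rw [dotProduct, ← Finset.univ_inter A, ← Finset.sum_ite_mem]
      exact Finset.sum_congr rfl fun x _ => by by_cases hx : x ∈ A <;> simp [hf, hx]
    have h2 : ∀ x ∈ A, (M *ᵥ f) x = ((t : ℝ) + 2) := by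
      intro x hx
      rw [hMf x, hregA x hx]; push_cast; ring
    rw [h1, Finset.sum_congr rfl h2, Finset.sum_const, hcard]
    push_cast; simp [smul_eq_mul]; ring
  have huMf : u ⬝ᵥ (M *ᵥ f) = 30 * ((t : ℝ) + 1) := by
    rw [hsdp, hMu]
    rw [smul_dotProduct, huf, smul_eq_mul]; ring
  have hfMu : f ⬝ᵥ (M *ᵥ u) = 30 * ((t : ℝ) + 1) := by
    rw [hMu, dotProduct_smul, smul_eq_mul, dotProduct_comm f u, huf]; ring
  have huMu : u ⬝ᵥ (M *ᵥ u) = 270 := by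
    rw [hMu, dotProduct_smul, huu, smul_eq_mul]; norm_num
  -- z is orthogonal to u and has Rayleigh quotient 1
  have huz : u ⬝ᵥ z = 0 := by
    rw [hz, dotProduct_sub, dotProduct_smul, huf, huu, hc, smul_eq_mul]
    ring
  have hMz : M *ᵥ z = M *ᵥ f - c • (M *ᵥ u) := by
    rw [hz, Matrix.mulVec_sub, Matrix.mulVec_smul]
  have hzz : z ⬝ᵥ z = 3 * ((t : ℝ) + 1) - ((t : ℝ) + 1) ^ 2 / 3 := by
    have hfu : f ⬝ᵥ u = u ⬝ᵥ f := dotProduct_comm f u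
    rw [hz, sub_dotProduct, dotProduct_sub, dotProduct_sub,
      smul_dotProduct, smul_dotProduct, dotProduct_smul,
      dotProduct_smul, hff, hfu, huf, huu, hc]
    simp only [smul_eq_mul]; push_cast; ring
  have hzMz : z ⬝ᵥ (M *ᵥ z) = z ⬝ᵥ z := by
    rw [hzz, hz, hMz, sub_dotProduct, dotProduct_sub, dotProduct_sub,
      smul_dotProduct, smul_dotProduct, dotProduct_smul,
      dotProduct_smul, hfMf, hfMu, huMf, huMu, hc]
    simp only [smul_eq_mul]; push_cast; ring
  -- coefficients of u in the eigenbasis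
  have hd : ∀ j, j ≠ i → v j ⬝ᵥ u = 0 := by
    intro j hj
    have h1 : v j ⬝ᵥ (M *ᵥ u) = 10 * (v j ⬝ᵥ u) := by
      rw [hMu, dotProduct_smul, smul_eq_mul]
    have h2 : v j ⬝ᵥ (M *ᵥ u) = μ j * (v j ⬝ᵥ u) := by
      rw [hsdp, heig j, smul_dotProduct, smul_eq_mul]
    have h3 : (μ j - 10) * (v j ⬝ᵥ u) = 0 := by linarith [h1, h2]
    rcases mul_eq_zero.mp h3 with h | h
    · exfalso; have := hi j hj; linarith
    · exact h
  have hdi : v i ⬝ᵥ u ≠ 0 := by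
    intro h0
    have : u ⬝ᵥ u = 0 := by
      rw [hpars u u]
      apply Finset.sum_eq_zero
      intro j _
      by_cases hj : j = i
      · subst hj; rw [h0]; ring
      · rw [hd j hj]; ring
    rw [huu] at this; norm_num at this
  have hai : v i ⬝ᵥ z = 0 := by
    have h1 : u ⬝ᵥ z = (v i ⬝ᵥ u) * (v i ⬝ᵥ z) := by
      rw [hpars u z]
      rw [Finset.sum_eq_single i]
      · intro j _ hj; rw [hd j hj]; ring
      · intro h; exact absurd (Finset.mem_univ i) h
    rw [huz] at h1
    exact (mul_eq_zero.mp h1.symm).resolve_left hdi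
  -- the key identity : each coefficient satisfies μ j * a j = a j
  have hkey : ∀ j, μ j * (v j ⬝ᵥ z) = v j ⬝ᵥ z := by
    have hsum : ∑ j, (1 - μ j) * (v j ⬝ᵥ z) ^ 2 = 0 := by
      have e1 : z ⬝ᵥ (M *ᵥ z) = ∑ j, μ j * (v j ⬝ᵥ z) ^ 2 := by
        rw [hpars z (M *ᵥ z)]
        apply Finset.sum_congr rfl
        intro j _
        have : v j ⬝ᵥ (M *ᵥ z) = μ j * (v j ⬝ᵥ z) := by
          rw [hsdp, heig j, smul_dotProduct, smul_eq_mul]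
        rw [this, dotProduct_comm (v j) z]; ring
      have e2 : z ⬝ᵥ z = ∑ j, (v j ⬝ᵥ z) ^ 2 := by
        rw [hpars z z]; apply Finset.sum_congr rfl; intro j _; ring
      have h0 := hzMz
      rw [e1, e2] at h0
      have h1 : ∑ j, ((v j ⬝ᵥ z) ^ 2 - μ j * (v j ⬝ᵥ z) ^ 2) = 0 := by
        rw [Finset.sum_sub_distrib, h0, sub_self]
      calc ∑ j, (1 - μ j) * (v j ⬝ᵥ z) ^ 2
          = ∑ j, ((v j ⬝ᵥ z) ^ 2 - μ j * (v j ⬝ᵥ z) ^ 2) :=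
            Finset.sum_congr rfl fun j _ => by ring
        _ = 0 := h1
    have hnn : ∀ j ∈ Finset.univ, 0 ≤ (1 - μ j) * (v j ⬝ᵥ z) ^ 2 := by
      intro j _
      by_cases hj : j = i
      · subst hj; rw [hai]; simp
      · have := hi j hj
        have h1 : (0:ℝ) ≤ 1 - μ j := by linarith
        positivity
    intro j
    have hall := (Finset.sum_eq_zero_iff_of_nonneg hnn).mp hsum j (Finset.mem_univ j)
    rcases mul_eq_zero.mp hall with h | h
    · have : μ j = 1 := by linarith
      rw [this, one_mul]
    · have : v j ⬝ᵥ z = 0 := by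
        have := sq_eq_zero_iff.mp h
        exact this
      rw [this, mul_zero]
  -- hence z is fixed by M
  have hMzz : M *ᵥ z = z := by
    have hlin : M *ᵥ (∑ j, (v j ⬝ᵥ z) • v j) = ∑ j, (v j ⬝ᵥ z) • (M *ᵥ v j) := by
      rw [← Matrix.mulVecLin_apply, map_sum]
      exact Finset.sum_congr rfl fun j _ => by
        rw [_root_.map_smul, Matrix.mulVecLin_apply]
    conv_lhs => rw [hexp z]
    rw [hlin]
    conv_rhs => rw [hexp z]
    exact Finset.sum_congr rfl fun j _ => by rw [heig j, smul_smul, mul_comm, hkey j]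
  -- conclude
  intro y hy
  rw [Finset.mem_compl] at hy
  have hyA : (((G.neighborFinset y).filter (· ∈ A)).card : ℝ) = (t : ℝ) + 1 := by
    have h1 : (M *ᵥ f) y = (M *ᵥ z) y + c * (M *ᵥ u) y := by
      rw [hMz]; simp
    have h2 : (M *ᵥ z) y = z y := by rw [hMzz]
    have h3 : z y = -c := by simp [hz, hf, hu, hy]
    have h4 : (M *ᵥ u) y = 10 := by rw [hMu]; simp [hu]
    rw [← hMf y, h1, h2, h3, h4, hc]
    ring
  have hyAn : ((G.neighborFinset y).filter (· ∈ A)).card = t + 1 := by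
    exact_mod_cast hyA
  have hdeg : ((G.neighborFinset y).filter (· ∈ A)).card
      + ((G.neighborFinset y).filter (· ∈ Aᶜ)).card = 10 := by
    have hsplit : ((G.neighborFinset y).filter (· ∈ A)).card
        + ((G.neighborFinset y).filter (fun x => ¬ x ∈ A)).card
        = (G.neighborFinset y).card :=
      Finset.card_filter_add_card_filter_not _
    have : (G.neighborFinset y).filter (· ∈ Aᶜ) = (G.neighborFinset y).filter (fun x => ¬ x ∈ A) := by
      apply Finset.filter_congr; intro x _; simp
    rw [this, hsplit]
    exact hG.regular y
  omega
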